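/- Let D be an orientation of a graph G and η an index function with η(v) = d⁺_D(v) for every vertex v. Then c_{P_G, η} = ±(|EE(D)| − |OE(D)|), where EE(D) and OE(D) are the sets of spanning Eulerian sub-digraphs of D with an even and odd number of edges, respectively. -/

import Mathlib

variable {V : Type*} [Fintype V] [DecidableEq V]

/-- Out-degree of `v` in the digraph with arc set `A`. -/
def outDeg (A : Finset (V × V)) (v : V) : ℕ := (A.filter (fun p => p.1 = v)).card

/-- In-degree of `v` in the digraph with arc set `A`. -/
def inDeg (A : Finset (V × V)) (v : V) : ℕ := (A.filter (fun p => p.2 = v)).card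

/-- A digraph is Eulerian if every vertex has equal in- and out-degree. -/
def IsEulerian (A : Finset (V × V)) : Prop := ∀ v, outDeg A v = inDeg A v

open scoped Classical in
/-- The spanning Eulerian sub-digraphs of `A` with an even number of edges. -/
noncomputable def EE (A : Finset (V × V)) : Finset (Finset (V × V)) :=
  A.powerset.filter (fun B => IsEulerian B ∧ Even B.card)

open scoped Classical in
/-- The spanning Eulerian sub-digraphs of `A` with an odd number of edges. -/
noncomputable def OE (A : Finset (V × V)) : Finset (Finset (V × V)) :=
  A.powerset.filter (fun B => IsEulerian B ∧ Odd B.card)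

/-- `A` is an orientation of the graph `G`: every arc is an edge of `G`, and each edge of `G`
receives exactly one of its two possible directions. -/
def IsOrientation (G : SimpleGraph V) (A : Finset (V × V)) : Prop :=
  (∀ p ∈ A, G.Adj p.1 p.2) ∧ ∀ u v, G.Adj u v → ((u, v) ∈ A ↔ (v, u) ∉ A)

/-- The arc `a` lies on a directed cycle of the digraph `A` (a closed directed walk with
distinct vertices). -/
def OnDirectedCycle (A : Finset (V × V)) (a : V × V) : Prop :=
  ∃ (n : ℕ) (f : Fin (n + 2) → V), Function.Injective f ∧
    (∀ i, (f i, f (i + 1)) ∈ A) ∧ ∃ i, (f i, f (i + 1)) = a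

/-- The arc set of a directed cycle (a closed directed walk with distinct vertices). -/
def IsDirectedCycle (C : Finset (V × V)) : Prop :=
  ∃ (n : ℕ) (f : Fin (n + 2) → V), Function.Injective f ∧
    C = Finset.image (fun i => (f i, f (i + 1))) Finset.univ

/-- The reversal of a digraph: every arc reversed. -/
def reverseArcs (C : Finset (V × V)) : Finset (V × V) := C.image (fun p => (p.2, p.1))

/-- The symmetric difference of two (edge-disjoint) digraphs: their union with all digons
(pairs of oppositely-oriented arcs) deleted. -/
def symmDiffArcs (H₁ H₂ : Finset (V × V)) : Finset (V × V) :=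
  (H₁ ∪ H₂).filter (fun p => (p.2, p.1) ∉ H₁ ∪ H₂)

open MvPolynomial in
/-- The graph polynomial `P_G(x) = ∏_{uv ∈ E(G), u < v} (x_v - x_u)` over `ℤ`. -/
noncomputable def graphPoly [LinearOrder V] (G : SimpleGraph V) : MvPolynomial V ℤ :=
  open scoped Classical in
  ∏ p ∈ Finset.univ.filter (fun p : V × V => p.1 < p.2 ∧ G.Adj p.1 p.2),
    (X p.2 - X p.1)

set_option maxHeartbeats 1000000
set_option linter.unusedSectionVars false
set_option linter.unusedVariables false

namespace AlonTarsi

open Finset MvPolynomial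
open scoped Classical

variable {V : Type*} [Fintype V] [DecidableEq V]

/-- swap of a pair -/
def sw (p : V × V) : V × V := (p.2, p.1)

@[simp] lemma sw_sw (p : V × V) : sw (sw p) = p := rfl

lemma sw_inj : Function.Injective (sw (V := V)) :=
  Function.Involutive.injective (fun p => rfl)

lemma outDeg_union (X Y : Finset (V × V)) (h : Disjoint X Y) (v : V) :
    outDeg (X ∪ Y) v = outDeg X v + outDeg Y v := by
  unfold outDeg
  rw [filter_union,
    card_union_of_disjoint (Finset.disjoint_filter_filter h)]

lemma outDeg_sw_image (B : Finset (V × V)) (v : V) :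
    outDeg (B.image sw) v = inDeg B v := by
  unfold outDeg inDeg
  rw [filter_image, card_image_of_injective _ sw_inj]
  rfl

lemma outDeg_sdiff_add (B A : Finset (V × V)) (h : B ⊆ A) (v : V) :
    outDeg (A \ B) v + outDeg B v = outDeg A v := by
  unfold outDeg
  rw [← card_union_of_disjoint
      (Finset.disjoint_filter_filter (sdiff_disjoint)),
    ← filter_union, sdiff_union_of_subset h]

lemma prod_X_eq {α : Type*} (s : Finset α) (f : α → V) :
    (∏ p ∈ s, (X (f p) : MvPolynomial V ℤ)) =
      monomial (∑ p ∈ s, Finsupp.single (f p) 1) 1 := by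
  induction s using Finset.induction with
  | empty => simp
  | insert _ _ h ih =>
      rw [prod_insert h, sum_insert h, ih, ← pow_one (X (f _)), X_pow_eq_monomial,
        monomial_mul, one_mul]

lemma negOnePow_congr {a b : ℕ} (h : Even (a + b)) : ((-1 : ℤ) ^ a) = (-1) ^ b := by
  rcases Nat.even_or_odd a with ha | ha
  · have hb : Even b := (Nat.even_add.mp h).mp ha
    rw [ha.neg_one_pow, hb.neg_one_pow]
  · have hb : Odd b := by
      rcases Nat.even_or_odd b with hb | hb
      · exact absurd ((Nat.even_add.mp h).mpr hb) (Nat.not_even_iff_odd.mpr ha)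
      · exact hb
    rw [ha.neg_one_pow, hb.neg_one_pow]

lemma eval_sum_single_snd (T : Finset (V × V)) (v : V) :
    (∑ p ∈ T, Finsupp.single p.2 1) v = inDeg T v := by
  rw [Finset.sum_apply', inDeg, Finset.card_filter]
  exact Finset.sum_congr rfl fun p _ => by rw [Finsupp.single_apply]

lemma eval_sum_single_fst (T : Finset (V × V)) (v : V) :
    (∑ p ∈ T, Finsupp.single p.1 1) v = outDeg T v := by
  rw [Finset.sum_apply', outDeg, Finset.card_filter]
  exact Finset.sum_congr rfl fun p _ => by rw [Finsupp.single_apply]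

lemma mem_sw_image (T : Finset (V × V)) (q : V × V) :
    q ∈ T.image sw ↔ sw q ∈ T := by
  constructor
  · rintro h
    obtain ⟨a, ha, rfl⟩ := Finset.mem_image.mp h
    simpa using ha
  · intro h
    exact Finset.mem_image.mpr ⟨sw q, h, rfl⟩

section Orientation

variable [LinearOrder V] (G : SimpleGraph V) (A E SA : Finset (V × V))

/-- reorientation map: the arcs of `A` whose underlying edge changed side. -/
noncomputable def phi (S : Finset (V × V)) : Finset (V × V) :=
  A.filter fun a => Xor (a ∈ S ∨ sw a ∈ S) (a ∈ SA ∨ sw a ∈ SA)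

/-- the inverse map. -/
noncomputable def psi (B : Finset (V × V)) : Finset (V × V) :=
  E.filter fun p => Xor (p ∈ SA) (p ∈ B ∨ sw p ∈ B)

lemma not_both (hA1 : ∀ p ∈ A, G.Adj p.1 p.2)
    (hA2 : ∀ u v, G.Adj u v → ((u, v) ∈ A ↔ (v, u) ∉ A))
    {a : V × V} (ha : a ∈ A) : sw a ∉ A := by
  have hadj := hA1 a ha
  have h := (hA2 a.1 a.2 hadj).mp (by rwa [Prod.mk.eta])
  exact h

lemma swE_not (hE : ∀ p : V × V, p ∈ E ↔ p.1 < p.2 ∧ G.Adj p.1 p.2)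
    {p : V × V} (hp : p ∈ E) : sw p ∉ E := by
  intro h
  have h1 := ((hE p).mp hp).1
  have h2 := ((hE (sw p)).mp h).1
  exact absurd h2 (lt_asymm h1)

lemma arcE (hE : ∀ p : V × V, p ∈ E ↔ p.1 < p.2 ∧ G.Adj p.1 p.2)
    (hA1 : ∀ p ∈ A, G.Adj p.1 p.2) {a : V × V} (ha : a ∈ A) :
    a ∈ E ∨ sw a ∈ E := by
  have hadj := hA1 a ha
  rcases lt_or_gt_of_ne hadj.ne with h | h
  · exact Or.inl ((hE a).mpr ⟨h, hadj⟩)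
  · exact Or.inr ((hE (sw a)).mpr ⟨h, hadj.symm⟩)

lemma edgeA (hE : ∀ p : V × V, p ∈ E ↔ p.1 < p.2 ∧ G.Adj p.1 p.2)
    (hA2 : ∀ u v, G.Adj u v → ((u, v) ∈ A ↔ (v, u) ∉ A))
    {p : V × V} (hp : p ∈ E) : p ∈ A ↔ sw p ∉ A := by
  have hadj := ((hE p).mp hp).2
  have h := hA2 p.1 p.2 hadj
  rw [Prod.mk.eta] at h
  exact h

lemma psi_phi (hE : ∀ p : V × V, p ∈ E ↔ p.1 < p.2 ∧ G.Adj p.1 p.2)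
    (hA2 : ∀ u v, G.Adj u v → ((u, v) ∈ A ↔ (v, u) ∉ A))
    (hSA : ∀ p, p ∈ SA ↔ p ∈ E ∧ sw p ∈ A)
    {S : Finset (V × V)} (hS : S ⊆ E) :
    psi E SA (phi A SA S) = S := by
  ext p
  by_cases hpE : p ∈ E
  · have h1 : sw p ∉ E := swE_not G E hE hpE
    have h2 : sw p ∉ S := fun h => h1 (hS h)
    have h3 : sw p ∉ SA := fun h => h1 ((hSA _).mp h).1
    have h4 : p ∈ SA ↔ sw p ∈ A := by rw [hSA]; simp [hpE]
    have h5 : p ∈ A ↔ sw p ∉ A := edgeA G A E hE hA2 hpE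
    simp only [psi, phi, mem_filter, xor_def, sw_sw]
    tauto
  · have h2 : p ∉ S := fun h => hpE (hS h)
    simp only [psi, mem_filter]
    tauto

lemma phi_psi (hE : ∀ p : V × V, p ∈ E ↔ p.1 < p.2 ∧ G.Adj p.1 p.2)
    (hA1 : ∀ p ∈ A, G.Adj p.1 p.2)
    (hA2 : ∀ u v, G.Adj u v → ((u, v) ∈ A ↔ (v, u) ∉ A))
    (hSA : ∀ p, p ∈ SA ↔ p ∈ E ∧ sw p ∈ A)
    {B : Finset (V × V)} (hB : B ⊆ A) :
    phi A SA (psi E SA B) = B := by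
  ext a
  by_cases haA : a ∈ A
  · have hsw : sw a ∉ A := not_both G A hA1 hA2 haA
    have hswB : sw a ∉ B := fun h => hsw (hB h)
    rcases arcE G A E hE hA1 haA with haE | haE
    · have h1 : sw a ∉ E := swE_not G E hE haE
      have h3 : sw a ∉ SA := fun h => h1 ((hSA _).mp h).1
      have h4 : a ∈ SA ↔ sw a ∈ A := by rw [hSA]; simp [haE]
      simp only [phi, psi, mem_filter, xor_def, sw_sw]
      tauto
    · have h1 : a ∉ E := fun h => (swE_not G E hE h) haE
      have h3 : a ∉ SA := fun h => h1 ((hSA _).mp h).1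
      have h4 : sw a ∈ SA ↔ a ∈ A := by rw [hSA]; simp [haE]
      simp only [phi, psi, mem_filter, xor_def, sw_sw]
      tauto
  · have h1 : a ∉ B := fun h => haA (hB h)
    simp only [phi, mem_filter]
    tauto

lemma decomp (hE : ∀ p : V × V, p ∈ E ↔ p.1 < p.2 ∧ G.Adj p.1 p.2)
    (hA1 : ∀ p ∈ A, G.Adj p.1 p.2)
    (hA2 : ∀ u v, G.Adj u v → ((u, v) ∈ A ↔ (v, u) ∉ A))
    (hSA : ∀ p, p ∈ SA ↔ p ∈ E ∧ sw p ∈ A)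
    {S : Finset (V × V)} (hS : S ⊆ E) :
    S.image sw ∪ (E \ S) = (A \ phi A SA S) ∪ (phi A SA S).image sw := by
  ext q
  simp only [mem_union, mem_sdiff, mem_sw_image, phi, mem_filter, xor_def, sw_sw]
  by_cases hqE : q ∈ E
  · have h1 : sw q ∉ E := swE_not G E hE hqE
    have h2 : sw q ∉ S := fun h => h1 (hS h)
    have h3 : sw q ∉ SA := fun h => h1 ((hSA _).mp h).1
    have h4 : q ∈ SA ↔ sw q ∈ A := by rw [hSA]; simp [hqE]
    have h5 : q ∈ A ↔ sw q ∉ A := edgeA G A E hE hA2 hqE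
    tauto
  · have h2 : q ∉ S := fun h => hqE (hS h)
    have h3 : q ∉ SA := fun h => hqE ((hSA _).mp h).1
    by_cases hq'E : sw q ∈ E
    · have h4 : sw q ∈ SA ↔ q ∈ A := by rw [hSA]; simp [hq'E]
      have h5 : sw q ∈ A ↔ q ∉ A := by
        have := edgeA G A E hE hA2 hq'E
        rwa [sw_sw] at this
      tauto
    · have h6 : q ∉ A := fun h => by rcases arcE G A E hE hA1 h with h' | h' <;> tauto
      have h7 : sw q ∉ A := fun h => by
        rcases arcE G A E hE hA1 h with h' | h'
        · exact hq'E h'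
        · rw [sw_sw] at h'; exact hqE h'
      have h8 : sw q ∉ S := fun h => hq'E (hS h)
      have h9 : sw q ∉ SA := fun h => hq'E ((hSA _).mp h).1
      tauto

lemma card_phi (hE : ∀ p : V × V, p ∈ E ↔ p.1 < p.2 ∧ G.Adj p.1 p.2)
    (hA1 : ∀ p ∈ A, G.Adj p.1 p.2)
    (hA2 : ∀ u v, G.Adj u v → ((u, v) ∈ A ↔ (v, u) ∉ A))
    (hSA : ∀ p, p ∈ SA ↔ p ∈ E ∧ sw p ∈ A)
    {S : Finset (V × V)} (hS : S ⊆ E) (hSAE : SA ⊆ E) :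
    (phi A SA S).card = ((S \ SA) ∪ (SA \ S)).card := by
  have hW : (S \ SA) ∪ (SA \ S) = E.filter (fun p => Xor (p ∈ S) (p ∈ SA)) := by
    ext p
    simp only [mem_union, mem_sdiff, mem_filter, xor_def]
    constructor
    · rintro (⟨h1, h2⟩ | ⟨h1, h2⟩)
      · exact ⟨hS h1, Or.inl ⟨h1, h2⟩⟩
      · exact ⟨hSAE h1, Or.inr ⟨h1, h2⟩⟩
    · rintro ⟨-, (⟨h1, h2⟩ | ⟨h1, h2⟩)⟩
      · exact Or.inl ⟨h1, h2⟩
      · exact Or.inr ⟨h1, h2⟩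
  rw [hW]
  apply Finset.card_bij' (fun a _ => if a.1 < a.2 then a else sw a)
    (fun p _ => if p ∈ A then p else sw p)
  · -- hi : image lands in the filter
    intro a ha
    rw [phi, mem_filter] at ha
    obtain ⟨haA, hx⟩ := ha
    have hadj := hA1 a haA
    rcases lt_or_gt_of_ne hadj.ne with h | h
    · have haE : a ∈ E := (hE a).mpr ⟨h, hadj⟩
      have h1 : sw a ∉ E := swE_not G E hE haE
      have h2 : sw a ∉ S := fun hh => h1 (hS hh)
      have h3 : sw a ∉ SA := fun hh => h1 (hSAE hh)
      rw [if_pos h, mem_filter]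
      refine ⟨haE, ?_⟩
      simp only [xor_def] at hx ⊢
      tauto
    · have haE : sw a ∈ E := (hE (sw a)).mpr ⟨h, hadj.symm⟩
      have h1 : a ∉ E := fun hh => (swE_not G E hE hh) haE
      have h2 : a ∉ S := fun hh => h1 (hS hh)
      have h3 : a ∉ SA := fun hh => h1 (hSAE hh)
      rw [if_neg (asymm h), mem_filter]
      refine ⟨haE, ?_⟩
      simp only [xor_def] at hx ⊢
      tauto
  · -- hj
    intro p hp
    rw [mem_filter] at hp
    obtain ⟨hpE, hx⟩ := hp
    have h1 : sw p ∉ E := swE_not G E hE hpE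
    have h2 : sw p ∉ S := fun hh => h1 (hS hh)
    have h3 : sw p ∉ SA := fun hh => h1 (hSAE hh)
    by_cases hpA : p ∈ A
    · rw [if_pos hpA, phi, mem_filter]
      refine ⟨hpA, ?_⟩
      simp only [xor_def] at hx ⊢
      tauto
    · have h5 : sw p ∈ A := by
        have := edgeA G A E hE hA2 hpE
        tauto
      rw [if_neg hpA, phi, mem_filter]
      refine ⟨h5, ?_⟩
      simp only [xor_def, sw_sw] at hx ⊢
      tauto
  · -- left inverse
    intro a ha
    rw [phi, mem_filter] at ha
    obtain ⟨haA, -⟩ := ha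
    by_cases h : a.1 < a.2
    · rw [if_pos h, if_pos haA]
    · rw [if_neg h, if_neg (not_both G A hA1 hA2 haA), sw_sw]
  · -- right inverse
    intro p hp
    rw [mem_filter] at hp
    have hlt := ((hE p).mp hp.1).1
    by_cases hpA : p ∈ A
    · rw [if_pos hpA, if_pos hlt]
    · rw [if_neg hpA]
      have : ¬ (sw p).1 < (sw p).2 := asymm hlt
      rw [if_neg this, sw_sw]

lemma degcond (hE : ∀ p : V × V, p ∈ E ↔ p.1 < p.2 ∧ G.Adj p.1 p.2)
    (hA1 : ∀ p ∈ A, G.Adj p.1 p.2)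
    (hA2 : ∀ u v, G.Adj u v → ((u, v) ∈ A ↔ (v, u) ∉ A))
    (hSA : ∀ p, p ∈ SA ↔ p ∈ E ∧ sw p ∈ A)
    {S : Finset (V × V)} (hS : S ⊆ E)
    (η : V →₀ ℕ) (hη : ∀ v, η v = outDeg A v) :
    ((∑ p ∈ S, Finsupp.single p.2 1) + (∑ p ∈ E \ S, Finsupp.single p.1 1) = η)
      ↔ IsEulerian (phi A SA S) := by
  set B := phi A SA S with hB
  have hBA : B ⊆ A := filter_subset _ _
  have hdis1 : Disjoint (S.image sw) (E \ S) := by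
    rw [Finset.disjoint_left]
    intro q hq hq'
    have h1 : sw q ∈ S := (mem_sw_image _ _).mp hq
    have h2 := ((hE (sw q)).mp (hS h1)).1
    have h3 := ((hE q).mp (mem_sdiff.mp hq').1).1
    exact absurd h3 (asymm h2)
  have hdis2 : Disjoint (A \ B) (B.image sw) := by
    rw [Finset.disjoint_left]
    intro q hq hq'
    have h1 : sw q ∈ B := (mem_sw_image _ _).mp hq'
    have h2 : sw (sw q) ∉ A := not_both G A hA1 hA2 (hBA h1)
    rw [sw_sw] at h2
    exact h2 (mem_sdiff.mp hq).1
  have key : ∀ v, inDeg S v + outDeg (E \ S) v = outDeg (A \ B) v + inDeg B v := by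
    intro v
    rw [← outDeg_sw_image S v, ← outDeg_union _ _ hdis1 v,
      decomp G A E SA hE hA1 hA2 hSA hS, outDeg_union _ _ hdis2, outDeg_sw_image]
  constructor
  · intro h v
    have hv := DFunLike.congr_fun h v
    rw [Finsupp.add_apply, eval_sum_single_snd, eval_sum_single_fst, key v, hη] at hv
    have h2 := outDeg_sdiff_add B A hBA v
    omega
  · intro h
    ext v
    rw [Finsupp.add_apply, eval_sum_single_snd, eval_sum_single_fst, key v, hη]
    have h2 := outDeg_sdiff_add B A hBA v
    have h3 := h v
    omega

end Orientation

end AlonTarsi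


/-- Alon–Tarsi: if `D` is an orientation of `G` and `η(v) = d⁺_D(v)` for every vertex,
then `c_{P_G,η} = ±(|EE(D)| - |OE(D)|)`. -/
theorem coeff_eq_pm_EE_sub_OE [LinearOrder V] (G : SimpleGraph V)
    (A : Finset (V × V)) (hA : IsOrientation G A) (η : V →₀ ℕ)
    (hη : ∀ v, η v = outDeg A v) :
    MvPolynomial.coeff η (graphPoly G) = ((EE A).card : ℤ) - (OE A).card ∨
      MvPolynomial.coeff η (graphPoly G) = -(((EE A).card : ℤ) - (OE A).card) := by
  classical
  obtain ⟨hA1, hA2⟩ := hA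
  set E : Finset (V × V) :=
    Finset.univ.filter (fun p : V × V => p.1 < p.2 ∧ G.Adj p.1 p.2) with hEdef
  have hE : ∀ p : V × V, p ∈ E ↔ p.1 < p.2 ∧ G.Adj p.1 p.2 := by
    intro p; rw [hEdef]; simp
  have hGP : graphPoly G
      = ∏ p ∈ E, ((MvPolynomial.X p.2 : MvPolynomial V ℤ) - MvPolynomial.X p.1) := by
    rw [graphPoly]
  set SA : Finset (V × V) := E.filter (fun p => AlonTarsi.sw p ∈ A) with hSAdef
  have hSA : ∀ p, p ∈ SA ↔ p ∈ E ∧ AlonTarsi.sw p ∈ A := by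
    intro p; rw [hSAdef]; simp
  have hSAE : SA ⊆ E := by rw [hSAdef]; exact Finset.filter_subset _ _
  have expand : MvPolynomial.coeff η (graphPoly G) =
      ∑ S ∈ E.powerset,
        (if ((∑ p ∈ S, Finsupp.single p.2 1) + (∑ p ∈ E \ S, Finsupp.single p.1 1) : V →₀ ℕ) = η
          then ((-1 : ℤ) ^ (E \ S).card) else 0) := by
    rw [hGP]
    have h1 : ∀ p : V × V, ((MvPolynomial.X p.2 : MvPolynomial V ℤ) - MvPolynomial.X p.1)
        = MvPolynomial.X p.2 + (MvPolynomial.C (-1) * MvPolynomial.X p.1) := by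
      intro p; rw [MvPolynomial.C_neg, MvPolynomial.C_1]; ring
    rw [Finset.prod_congr rfl (fun p _ => h1 p), Finset.prod_add, MvPolynomial.coeff_sum]
    refine Finset.sum_congr rfl fun S hS => ?_
    rw [Finset.prod_mul_distrib, Finset.prod_const, AlonTarsi.prod_X_eq, AlonTarsi.prod_X_eq,
      ← map_pow, mul_left_comm, MvPolynomial.monomial_mul, mul_one,
      MvPolynomial.coeff_C_mul, MvPolynomial.coeff_monomial, mul_ite, mul_one, mul_zero]
  have bij : (∑ S ∈ E.powerset,
        (if ((∑ p ∈ S, Finsupp.single p.2 1) + (∑ p ∈ E \ S, Finsupp.single p.1 1) : V →₀ ℕ) = η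
          then ((-1 : ℤ) ^ (E \ S).card) else 0))
      = ∑ B ∈ A.powerset,
        (if IsEulerian B then ((-1 : ℤ) ^ (E \ SA).card) * (-1) ^ B.card else 0) := by
    refine Finset.sum_bij' (fun S _ => AlonTarsi.phi A SA S) (fun B _ => AlonTarsi.psi E SA B)
      ?_ ?_ ?_ ?_ ?_
    · intro S hS
      exact Finset.mem_powerset.mpr (Finset.filter_subset _ _)
    · intro B hB
      exact Finset.mem_powerset.mpr (Finset.filter_subset _ _)
    · intro S hS
      exact AlonTarsi.psi_phi G A E SA hE hA2 hSA (Finset.mem_powerset.mp hS)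
    · intro B hB
      exact AlonTarsi.phi_psi G A E SA hE hA1 hA2 hSA (Finset.mem_powerset.mp hB)
    · intro S hS
      have hSE := Finset.mem_powerset.mp hS
      simp only [AlonTarsi.degcond G A E SA hE hA1 hA2 hSA hSE η hη]
      by_cases h : IsEulerian (AlonTarsi.phi A SA S)
      · rw [if_pos h, if_pos h, ← pow_add]
        apply AlonTarsi.negOnePow_congr
        have hc := AlonTarsi.card_phi G A E SA hE hA1 hA2 hSA hSE hSAE
        have hd : Disjoint (S \ SA) (SA \ S) := disjoint_sdiff_sdiff
        have e0 := Finset.card_union_of_disjoint hd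
        have e1 := Finset.card_sdiff_add_card_eq_card hSE
        have e2 := Finset.card_sdiff_add_card_eq_card hSAE
        have e3 : (S \ SA).card + (S ∩ SA).card = S.card :=
          Finset.card_sdiff_add_card_inter S SA
        have e4 : (SA \ S).card + (SA ∩ S).card = SA.card :=
          Finset.card_sdiff_add_card_inter SA S
        have e5 : (SA ∩ S).card = (S ∩ SA).card := by rw [Finset.inter_comm]
        rw [Nat.even_iff]
        omega
      · rw [if_neg h, if_neg h]
  have split : (∑ B ∈ A.powerset,
        (if IsEulerian B then ((-1 : ℤ) ^ (E \ SA).card) * (-1) ^ B.card else 0))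
      = ((-1 : ℤ) ^ (E \ SA).card) * (((EE A).card : ℤ) - (OE A).card) := by
    rw [← Finset.sum_filter, ← Finset.mul_sum]
    congr 1
    have hsum : ∀ B ∈ A.powerset.filter (fun B => IsEulerian B),
        ((-1 : ℤ) ^ B.card) = (if Even B.card then (1 : ℤ) else -1) := by
      intro B _
      by_cases h : Even B.card
      · rw [if_pos h, h.neg_one_pow]
      · rw [if_neg h, (Nat.not_even_iff_odd.mp h).neg_one_pow]
    rw [Finset.sum_congr rfl hsum, Finset.sum_ite, Finset.sum_const, Finset.sum_const,
      Finset.filter_filter, Finset.filter_filter]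
    have hEE : Finset.filter (fun B => IsEulerian B ∧ Even B.card) A.powerset = EE A := by
      ext B; simp [EE, Finset.mem_filter]
    have hOE : Finset.filter (fun B => IsEulerian B ∧ ¬ Even B.card) A.powerset = OE A := by
      ext B; simp [OE, Finset.mem_filter, Nat.not_even_iff_odd]
    rw [hEE, hOE]
    simp only [nsmul_eq_mul, mul_one, mul_neg]
    ring
  rcases Nat.even_or_odd ((E \ SA).card) with hev | hod
  · left
    rw [expand, bij, split, hev.neg_one_pow, one_mul]
  · right
    rw [expand, bij, split, hod.neg_one_pow, neg_one_mul]
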